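/- For every instance of Seat Arrangement with binary preferences, writing n = |P| and m = |E(G)|, there exists a maximin arrangement π_f such that for every arrangement π either sw(π) ≤ sw(π_f) or n · sw(π) ≤ 2m · sw(π_f). (Consequently, the price of fairness of binary Seat Arrangement is at most the average degree 2m/n of the seat graph.) -/

import Mathlib

open scoped Classical

noncomputable section

namespace SeatArrangement

variable {P V : Type*}

/-- The utility of agent `p` under arrangement `π`:
the sum, over the seat-graph neighbors `v` of `π p`, of `p`'s preference for the agent seated
at `v`. -/
def utility [Fintype V] (G : SimpleGraph V) (f : P → P → ℝ) (π : P ≃ V) (p : P) : ℝ :=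
  ∑ v : V, if G.Adj (π p) v then f p (π.symm v) else 0

/-- The social welfare of an arrangement: the sum of the utilities of all agents. -/
def sw [Fintype P] [Fintype V] (G : SimpleGraph V) (f : P → P → ℝ) (π : P ≃ V) : ℝ :=
  ∑ p : P, utility G f π p

/-- The `(p,q)`-swap arrangement of `π`. -/
def swapArr (π : P ≃ V) (p q : P) : P ≃ V := (Equiv.swap p q).trans π

/-- `{p, q}` is a blocking pair for `π`: both agents strictly improve by swapping seats. -/
def blocking [Fintype V] (G : SimpleGraph V) (f : P → P → ℝ) (π : P ≃ V) (p q : P) : Prop :=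
  p ≠ q ∧ utility G f π p < utility G f (swapArr π p q) p
        ∧ utility G f π q < utility G f (swapArr π p q) q

/-- An arrangement is stable if it has no blocking pair. -/
def stable [Fintype V] (G : SimpleGraph V) (f : P → P → ℝ) (π : P ≃ V) : Prop :=
  ∀ p q : P, ¬ blocking G f π p q

/-- An arrangement is envy-free if no agent would strictly improve by taking
another agent's seat (via a swap). -/
def envyFree [Fintype V] (G : SimpleGraph V) (f : P → P → ℝ) (π : P ≃ V) : Prop :=
  ∀ p q : P, p ≠ q → utility G f (swapArr π p q) p ≤ utility G f π p

/-- The least utility of an agent under `π` (for a finite nonempty set of agents, the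
infimum of the range of utilities is the minimum utility). -/
def minUtil [Fintype V] (G : SimpleGraph V) (f : P → P → ℝ) (π : P ≃ V) : ℝ :=
  sInf (Set.range (utility G f π))

/-- A maximin arrangement maximizes the least utility of an agent. -/
def maximin [Fintype V] (G : SimpleGraph V) (f : P → P → ℝ) (πf : P ≃ V) : Prop :=
  ∀ π : P ≃ V, minUtil G f π ≤ minUtil G f πf

/-- A maximum arrangement maximizes the social welfare. -/
def maximum [Fintype P] [Fintype V] (G : SimpleGraph V) (f : P → P → ℝ) (πm : P ≃ V) : Prop :=
  ∀ π : P ≃ V, sw G f π ≤ sw G f πm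

end SeatArrangement

open SeatArrangement

section Aux

variable {P V : Type*}

lemma binary_sum_nat {V : Type*} (s : Finset V) (g : V → ℝ)
    (h : ∀ v ∈ s, g v = 0 ∨ g v = 1) : ∃ n : ℕ, ∑ v ∈ s, g v = n := by
  classical
  induction s using Finset.cons_induction with
  | empty => exact ⟨0, by simp⟩
  | cons a s ha ih =>
    obtain ⟨n, hn⟩ := ih (fun v hv => h v (Finset.mem_cons_of_mem hv))
    rcases h a (Finset.mem_cons_self a s) with h0 | h1
    · exact ⟨n, by rw [Finset.sum_cons, h0, hn]; ring⟩
    · exact ⟨n + 1, by rw [Finset.sum_cons, h1, hn]; push_cast; ring⟩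

lemma utility_terms_binary [Fintype V] (G : SimpleGraph V) (f : P → P → ℝ)
    (hbin : ∀ p q : P, p ≠ q → f p q = 0 ∨ f p q = 1) (π : P ≃ V) (p : P) (v : V) :
    (if G.Adj (π p) v then f p (π.symm v) else 0) = 0 ∨
    (if G.Adj (π p) v then f p (π.symm v) else 0) = 1 := by
  by_cases hv : G.Adj (π p) v
  · simp only [hv, if_true]
    refine hbin p (π.symm v) ?_
    intro hc
    exact G.ne_of_adj hv (by rw [hc]; simp)
  · simp [hv]

lemma utility_nonneg [Fintype V] (G : SimpleGraph V) (f : P → P → ℝ)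
    (hbin : ∀ p q : P, p ≠ q → f p q = 0 ∨ f p q = 1) (π : P ≃ V) (p : P) :
    0 ≤ utility G f π p := by
  refine Finset.sum_nonneg fun v _ => ?_
  rcases utility_terms_binary G f hbin π p v with h | h <;> rw [h] <;> norm_num

lemma minUtil_nonneg [Fintype P] [Nonempty P] [Fintype V] (G : SimpleGraph V) (f : P → P → ℝ)
    (hbin : ∀ p q : P, p ≠ q → f p q = 0 ∨ f p q = 1) (π : P ≃ V) :
    0 ≤ minUtil G f π := by
  refine le_csInf (Set.range_nonempty _) ?_
  rintro x ⟨p, rfl⟩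
  exact utility_nonneg G f hbin π p

lemma minUtil_le [Fintype P] [Fintype V] (G : SimpleGraph V) (f : P → P → ℝ)
    (π : P ≃ V) (p : P) : minUtil G f π ≤ utility G f π p :=
  csInf_le (Set.finite_range _).bddBelow ⟨p, rfl⟩

lemma sw_le_twice_edges [Fintype P] [Fintype V] (G : SimpleGraph V) (f : P → P → ℝ)
    (hbin : ∀ p q : P, p ≠ q → f p q = 0 ∨ f p q = 1) (π : P ≃ V) :
    sw G f π ≤ 2 * (G.edgeSet.ncard : ℝ) := by
  have hut : ∀ p : P, utility G f π p ≤ (G.degree (π p) : ℝ) := by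
    intro p
    unfold utility
    have : ∑ v : V, (if G.Adj (π p) v then (1:ℝ) else 0) = (G.degree (π p) : ℝ) := by
      rw [Finset.sum_boole]
      congr 1
      rw [SimpleGraph.degree, SimpleGraph.neighborFinset_eq_filter]
    rw [← this]
    refine Finset.sum_le_sum fun v _ => ?_
    by_cases hv : G.Adj (π p) v
    · simp only [hv, if_true]
      rcases utility_terms_binary G f hbin π p v with h | h <;> simp only [hv, if_true] at h <;>
        simp [h]
    · simp [hv]
  calc sw G f π ≤ ∑ p : P, (G.degree (π p) : ℝ) := Finset.sum_le_sum fun p _ => hut p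
    _ = ∑ v : V, (G.degree v : ℝ) := Equiv.sum_comp π (fun v => (G.degree v : ℝ))
    _ = 2 * (G.edgeSet.ncard : ℝ) := by
        rw [Set.ncard_eq_toFinset_card']
        have := SimpleGraph.sum_degrees_eq_twice_card_edges G
        have h2 : ((∑ v : V, G.degree v : ℕ) : ℝ) = ((2 * G.edgeFinset.card : ℕ) : ℝ) := by
          exact_mod_cast congrArg Nat.cast this
        push_cast at h2 ⊢
        rw [h2]
        congr 2

end Aux

/-- For binary preferences, there is a maximin arrangement `πf` such that
every arrangement `π` satisfies `sw π ≤ sw πf` or `n * sw π ≤ 2m * sw πf`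
(so the price of fairness is at most the average degree `2m/n`). -/
theorem binary_pof_le_average_degree {P V : Type*} [Fintype P] [Nonempty P] [Fintype V]
    (G : SimpleGraph V) (f : P → P → ℝ)
    (hbin : ∀ p q : P, p ≠ q → f p q = 0 ∨ f p q = 1)
    (hne : Nonempty (P ≃ V)) :
    ∃ πf : P ≃ V, maximin G f πf ∧
      ∀ π : P ≃ V, sw G f π ≤ sw G f πf ∨
        (Fintype.card P : ℝ) * sw G f π ≤ (2 * (G.edgeSet.ncard : ℝ)) * sw G f πf := by
  obtain ⟨πf, hπf⟩ := Finite.exists_max (minUtil G f : (P ≃ V) → ℝ)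
  by_cases h0 : minUtil G f πf ≤ 0
  · obtain ⟨πm, hπm⟩ := Finite.exists_max (sw G f : (P ≃ V) → ℝ)
    refine ⟨πm, fun π => le_trans (le_trans (hπf π) h0) (minUtil_nonneg G f hbin πm),
      fun π => Or.inl (hπm π)⟩
  · refine ⟨πf, hπf, fun π => Or.inr ?_⟩
    push_neg at h0
    -- minUtil πf is a natural number, hence ≥ 1
    have hmem : minUtil G f πf ∈ Set.range (utility G f πf) :=
      (Set.range_nonempty _).csInf_mem (Set.finite_range _)
    obtain ⟨p0, hp0⟩ := hmem
    obtain ⟨n, hn⟩ := binary_sum_nat Finset.univ _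
      (fun v _ => utility_terms_binary G f hbin πf p0 v)
    have h1 : (1:ℝ) ≤ minUtil G f πf := by
      rw [← hp0] at h0 ⊢
      rw [utility] at *
      rw [hn] at h0 ⊢
      exact_mod_cast Nat.one_le_iff_ne_zero.mpr (by exact_mod_cast h0.ne')
    have hswf : (Fintype.card P : ℝ) ≤ sw G f πf := by
      have : ∀ p : P, (1:ℝ) ≤ utility G f πf p :=
        fun p => le_trans h1 (minUtil_le G f πf p)
      calc (Fintype.card P : ℝ) = ∑ _p : P, (1:ℝ) := by simp
        _ ≤ sw G f πf := Finset.sum_le_sum fun p _ => this p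
    have hswπ : sw G f π ≤ 2 * (G.edgeSet.ncard : ℝ) := sw_le_twice_edges G f hbin π
    have hn0 : (0:ℝ) ≤ (Fintype.card P : ℝ) := Nat.cast_nonneg _
    have hm0 : (0:ℝ) ≤ 2 * (G.edgeSet.ncard : ℝ) := by positivity
    calc (Fintype.card P : ℝ) * sw G f π ≤ (Fintype.card P : ℝ) * (2 * (G.edgeSet.ncard : ℝ)) :=
          mul_le_mul_of_nonneg_left hswπ hn0
      _ = (2 * (G.edgeSet.ncard : ℝ)) * (Fintype.card P : ℝ) := mul_comm _ _
      _ ≤ (2 * (G.edgeSet.ncard : ℝ)) * sw G f πf := mul_le_mul_of_nonneg_left hswf hm0
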